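/- If m is not divisible by n, then the space of SL(n,f)-invariants in V^⊗m is zero, where V = f^n with the standard SL(n) action. -/

import Mathlib

open scoped TensorProduct

/-- Diagonal action of a matrix on the `m`-fold tensor power of `Fin n → f`. -/
noncomputable def tensorAct (f : Type*) [Field f] (n m : ℕ) (a : Matrix (Fin n) (Fin n) f) :
    (⨂[f] _ : Fin m, (Fin n → f)) →ₗ[f] ⨂[f] _ : Fin m, (Fin n → f) :=
  PiTensorProduct.map (fun _ => a.mulVecLin)

/-- The antisymmetrized tensor `ω = Σ_σ sgn σ • x_{σ 1} ⊗ ⋯ ⊗ x_{σ n}`. -/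
noncomputable def omegaTensor (f : Type*) [Field f] (n : ℕ) :
    ⨂[f] _ : Fin n, (Fin n → f) :=
  ∑ σ : Equiv.Perm (Fin n),
    (Equiv.Perm.sign σ : ℤ) • ⨂ₜ[f] i, Pi.single (σ i) (1 : f)

section Aux

variable (f : Type*) [Field f] (n m : ℕ)

/-- The coordinate functional at a multi-index `k`. -/
noncomputable def tensorCoord (k : Fin m → Fin n) :
    (⨂[f] _ : Fin m, (Fin n → f)) →ₗ[f] f :=
  PiTensorProduct.lift
    ((MultilinearMap.mkPiAlgebra f (Fin m) f).compLinearMap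
      (fun i => LinearMap.proj (k i)))

lemma tensorCoord_tprod (k : Fin m → Fin n) (v : Fin m → (Fin n → f)) :
    tensorCoord f n m k (⨂ₜ[f] i, v i) = ∏ i, v i (k i) := by
  simp [tensorCoord]

lemma tensor_reconstruct (t : ⨂[f] _ : Fin m, (Fin n → f)) :
    t = ∑ k : Fin m → Fin n,
      tensorCoord f n m k t • ⨂ₜ[f] i, Pi.single (k i) (1 : f) := by
  have key : (LinearMap.id : (⨂[f] _ : Fin m, (Fin n → f)) →ₗ[f] _)
      = ∑ k : Fin m → Fin n,
        (tensorCoord f n m k).smulRight (⨂ₜ[f] i, Pi.single (k i) (1 : f)) := by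
    ext v
    generalize (fun _ : Fin m => (1:f)) = x
    simp only [LinearMap.compMultilinearMap_apply, MultilinearMap.compLinearMap_apply,
      LinearMap.id_apply, LinearMap.coe_sum, Finset.sum_apply,
      LinearMap.smulRight_apply, tensorCoord_tprod, LinearMap.single_apply]
    rw [Finset.sum_eq_single v]
    · have h1 : (∏ i : Fin m, (Pi.single (v i) (x i) : Fin n → f) (v i)) = ∏ i, x i := by
        refine Finset.prod_congr rfl fun i _ => ?_
        simp
      rw [h1, ← MultilinearMap.map_smul_univ]
      congr 1
      funext i
      funext j
      simp [Pi.single_apply]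
    · intro k _ hk
      have : ∃ i, k i ≠ v i := by
        by_contra hc
        push_neg at hc
        exact hk (funext hc)
      obtain ⟨i, hi⟩ := this
      have hz : (Pi.single (v i) (x i) : Fin n → f) (k i) = 0 := by
        simp [Pi.single_apply, hi]
      rw [Finset.prod_eq_zero (Finset.mem_univ i) hz, zero_smul]
    · intro hv; exact absurd (Finset.mem_univ v) hv
  conv_lhs => rw [← LinearMap.id_apply (R := f) t, key]
  simp

lemma tensorCoord_act (k : Fin m → Fin n) (d : Fin n → f)
    (t : ⨂[f] _ : Fin m, (Fin n → f)) :
    tensorCoord f n m k (tensorAct f n m (Matrix.diagonal d) t)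
      = (∏ i, d (k i)) * tensorCoord f n m k t := by
  have key : (tensorCoord f n m k).comp
        (PiTensorProduct.map (fun _ : Fin m => (Matrix.diagonal d).mulVecLin))
      = (∏ i, d (k i)) • tensorCoord f n m k := by
    ext v x
    simp only [LinearMap.compMultilinearMap_apply, MultilinearMap.compLinearMap_apply,
      LinearMap.coe_comp, Function.comp_apply, PiTensorProduct.map_tprod, tensorCoord_tprod,
      LinearMap.smul_apply, smul_eq_mul, LinearMap.single_apply,
      Matrix.mulVecLin_apply, Matrix.mulVec_diagonal]
    rw [Finset.prod_mul_distrib]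
  calc tensorCoord f n m k (tensorAct f n m (Matrix.diagonal d) t)
      = ((tensorCoord f n m k).comp
          (PiTensorProduct.map (fun _ : Fin m => (Matrix.diagonal d).mulVecLin))) t := rfl
    _ = (∏ i, d (k i)) * tensorCoord f n m k t := by rw [key]; simp

lemma prod_fiber_pow (k : Fin m → Fin n) (d : Fin n → f) :
    ∏ i, d (k i) = ∏ j : Fin n, d j ^ (Finset.univ.filter (fun i => k i = j)).card := by
  rw [← Finset.prod_fiberwise' Finset.univ k d]
  exact Finset.prod_congr rfl fun j _ => (Finset.prod_const _)

lemma prod_two_point (j₀ j₁ : Fin n) (hne : j₀ ≠ j₁) (b : Fin n → ℕ) :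
    ∏ j : Fin n, (if j = j₀ then (2:f) else if j = j₁ then 2⁻¹ else 1) ^ b j
      = 2 ^ b j₀ * 2⁻¹ ^ b j₁ := by
  rw [← Finset.mul_prod_erase _ _ (Finset.mem_univ j₀),
      ← Finset.mul_prod_erase _ _ (Finset.mem_erase.2 ⟨hne.symm, Finset.mem_univ j₁⟩)]
  have h0 : (if j₀ = j₀ then (2:f) else if j₀ = j₁ then 2⁻¹ else 1) = 2 := by simp
  have h1 : (if j₁ = j₀ then (2:f) else if j₁ = j₁ then 2⁻¹ else 1) = 2⁻¹ := by
    simp [hne.symm]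
  rw [h0, h1, Finset.prod_eq_one, mul_one]
  intro j hj
  simp only [Finset.mem_erase] at hj
  simp [hj.1, hj.2.1]

end Aux

theorem invariants_zero_of_not_dvd (f : Type*) [Field f] [CharZero f] (n m : ℕ)
    (h : ¬ n ∣ m) (t : ⨂[f] _ : Fin m, (Fin n → f))
    (ht : ∀ a : Matrix.SpecialLinearGroup (Fin n) f,
      tensorAct f n m (a : Matrix (Fin n) (Fin n) f) t = t) :
    t = 0 := by
  have hcoord : ∀ k : Fin m → Fin n, tensorCoord f n m k t = 0 := by
    intro k
    by_contra hc
    have hm : m ≠ 0 := fun hm0 => h (hm0 ▸ dvd_zero n)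
    have hn : 0 < n := (k ⟨0, Nat.pos_of_ne_zero hm⟩).pos
    set a : Fin n → ℕ := fun j => (Finset.univ.filter (fun i => k i = j)).card with ha
    have hsum : m = ∑ j, a j := by
      have := Finset.card_eq_sum_card_fiberwise (s := (Finset.univ : Finset (Fin m)))
        (t := (Finset.univ : Finset (Fin n))) (f := k) (fun x _ => Finset.mem_univ _)
      simpa [ha] using this
    -- invariance under diagonal determinant-one matrices
    have hinv : ∀ d : Fin n → f, (∏ j, d j) = 1 → (∏ j, d j ^ a j) = 1 := by
      intro d hdet
      have hA := ht ⟨Matrix.diagonal d, by rw [Matrix.det_diagonal]; exact hdet⟩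
      have h2 := congrArg (tensorCoord f n m k) hA
      rw [show ((⟨Matrix.diagonal d, by rw [Matrix.det_diagonal]; exact hdet⟩ :
            Matrix.SpecialLinearGroup (Fin n) f) : Matrix (Fin n) (Fin n) f)
          = Matrix.diagonal d from rfl] at h2
      rw [tensorCoord_act, prod_fiber_pow] at h2
      have := mul_right_cancel₀ hc (h2.trans (one_mul _).symm)
      simpa [ha] using this
    -- all fiber cardinalities are equal
    have heq : ∀ j₀ j₁ : Fin n, a j₀ = a j₁ := by
      intro j₀ j₁
      by_cases hne : j₀ = j₁
      · rw [hne]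
      have hdet : (∏ j : Fin n,
          (if j = j₀ then (2:f) else if j = j₁ then 2⁻¹ else 1)) = 1 := by
        have := prod_two_point f n j₀ j₁ hne (fun _ => 1)
        simpa [mul_inv_cancel₀ (two_ne_zero (α := f))] using this
      have h1 := hinv (fun j => if j = j₀ then (2:f) else if j = j₁ then 2⁻¹ else 1) hdet
      rw [prod_two_point f n j₀ j₁ hne a, inv_pow] at h1
      have h2 : (2:f) ^ a j₀ = 2 ^ a j₁ :=
        (mul_inv_eq_one₀ (pow_ne_zero _ (two_ne_zero (α := f)))).mp h1
      have h3 : ((2 ^ a j₀ : ℕ) : f) = ((2 ^ a j₁ : ℕ) : f) := by push_cast; exact h2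
      exact Nat.pow_right_injective le_rfl (Nat.cast_injective h3)
    -- conclude n ∣ m
    refine h ⟨a ⟨0, hn⟩, ?_⟩
    rw [hsum, Finset.sum_congr rfl (fun j _ => heq j ⟨0, hn⟩), Finset.sum_const]
    simp [mul_comm]
  rw [tensor_reconstruct f n m t]
  simp [hcoord]
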